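/- Let Λ, Ω, Y be normed vector spaces, X a reflexive Banach space, and D a nonempty compact convex subset of X. Let K : D × Λ → 2^D and F : D × D × Ω → 2^Y be set-valued mappings and C ⊆ Y a closed set with nonempty interior; define M₂(u, λ) = {x ∈ cl K(x, λ) : F(x, y, u) ⊆ Y \ (−int C) for all y ∈ K(x, λ)}, and assume M₂(u, λ) ≠ ∅ for all (u, λ) in a neighborhood of (u₀, λ₀) ∈ Ω × Λ. Assume: (i) K(·, λ₀) is rotund and K is continuous at every point of D × {λ₀} with nonempty closed convex values; (ii) F is upper semicontinuous at every point of D × D × {u₀}; (iii) for every x ∈ M₂(u₀, λ₀) and every y ∈ K(x, λ₀), F(x, y, u₀) ⊆ Y \ (−C). Then M₂(·, ·) is lower semicontinuous at (u₀, λ₀). -/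

import Mathlib

open Filter Topology Set Pointwise

/-- A set-valued mapping `Φ` is lower semicontinuous at `u₀` if for every `x ∈ Φ(u₀)` and
every open neighborhood `V` of `x` there is a neighborhood `U` of `u₀` such that
`Φ(u) ∩ V ≠ ∅` for all `u ∈ U`. -/
def LscAt {Δ Δ₁ : Type*} [TopologicalSpace Δ] [TopologicalSpace Δ₁]
    (Φ : Δ → Set Δ₁) (u₀ : Δ) : Prop :=
  ∀ x ∈ Φ u₀, ∀ V : Set Δ₁, IsOpen V → x ∈ V →
    ∃ U ∈ 𝓝 u₀, ∀ u ∈ U, (Φ u ∩ V).Nonempty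

/-- Lower semicontinuity at `u₀` of a set-valued mapping whose domain is the subset `s`
(neighborhoods are taken relative to `s`). -/
def LscWithinAt {Δ Δ₁ : Type*} [TopologicalSpace Δ] [TopologicalSpace Δ₁]
    (Φ : Δ → Set Δ₁) (s : Set Δ) (u₀ : Δ) : Prop :=
  ∀ x ∈ Φ u₀, ∀ V : Set Δ₁, IsOpen V → x ∈ V →
    ∃ U ∈ 𝓝[s] u₀, ∀ u ∈ U, (Φ u ∩ V).Nonempty

/-- A set-valued mapping `Φ` is upper semicontinuous at `u₀` if for every open `V ⊇ Φ(u₀)`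
there is a neighborhood `U` of `u₀` with `Φ(u) ⊆ V` for all `u ∈ U`. -/
def UscAt {Δ Δ₁ : Type*} [TopologicalSpace Δ] [TopologicalSpace Δ₁]
    (Φ : Δ → Set Δ₁) (u₀ : Δ) : Prop :=
  ∀ V : Set Δ₁, IsOpen V → Φ u₀ ⊆ V → ∃ U ∈ 𝓝 u₀, ∀ u ∈ U, Φ u ⊆ V

/-- Upper semicontinuity at `u₀` of a set-valued mapping whose domain is the subset `s`
(neighborhoods are taken relative to `s`). -/
def UscWithinAt {Δ Δ₁ : Type*} [TopologicalSpace Δ] [TopologicalSpace Δ₁]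
    (Φ : Δ → Set Δ₁) (s : Set Δ) (u₀ : Δ) : Prop :=
  ∀ V : Set Δ₁, IsOpen V → Φ u₀ ⊆ V → ∃ U ∈ 𝓝[s] u₀, ∀ u ∈ U, Φ u ⊆ V

/-- The graph of a set-valued mapping `Φ` with domain `A`. -/
def GraphOn {X Z : Type*} (A : Set X) (Φ : X → Set Z) : Set (X × Z) :=
  {p | p.1 ∈ A ∧ p.2 ∈ Φ p.1}

/-- A set-valued mapping `Φ` with domain `A` is rotund if its graph is convex and, for any
two points of the graph with distinct first components and distinct second components,
the open segment between them meets the complement of the boundary of the graph. -/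
def RotundOn {X Z : Type*} [NormedAddCommGroup X] [NormedSpace ℝ X]
    [NormedAddCommGroup Z] [NormedSpace ℝ Z] (A : Set X) (Φ : X → Set Z) : Prop :=
  Convex ℝ (GraphOn A Φ) ∧
    ∀ p ∈ GraphOn A Φ, ∀ q ∈ GraphOn A Φ, p.1 ≠ q.1 → p.2 ≠ q.2 →
      ∃ l ∈ Set.Ioo (0 : ℝ) 1, l • p + (1 - l) • q ∈ (frontier (GraphOn A Φ))ᶜ

open Metric

private lemma exists_unit_half_lt {X : Type*} [NormedAddCommGroup X] [NormedSpace ℝ X]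
    (f : X →L[ℝ] ℝ) (hf : f ≠ 0) : ∃ e : X, ‖e‖ ≤ 1 ∧ ‖f‖ / 2 < f e := by
  by_contra h
  push_neg at h
  have hb : ∀ x : X, ‖f x‖ ≤ (‖f‖ / 2) * ‖x‖ := by
    intro x
    rcases eq_or_ne x 0 with rfl | hx
    · simp
    · have hxn : (0:ℝ) < ‖x‖ := norm_pos_iff.mpr hx
      have he : ‖(‖x‖⁻¹ • x)‖ ≤ 1 := by
        rw [norm_smul, norm_inv, norm_norm]
        field_simp; exact le_rfl
      have h1 := h _ he
      have h2 := h (-(‖x‖⁻¹ • x)) (by rw [norm_neg]; exact he)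
      rw [map_neg] at h2
      have habs : |f (‖x‖⁻¹ • x)| ≤ ‖f‖ / 2 := abs_le.mpr ⟨by linarith, h1⟩
      have : f (‖x‖⁻¹ • x) = ‖x‖⁻¹ * f x := by rw [map_smul]; simp
      rw [this, abs_mul, abs_inv, abs_norm] at habs
      rw [Real.norm_eq_abs]
      calc |f x| = ‖x‖ * (‖x‖⁻¹ * |f x|) := by field_simp
        _ ≤ ‖x‖ * (‖f‖ / 2) := by
            apply mul_le_mul_of_nonneg_left habs (le_of_lt hxn)
        _ = ‖f‖ / 2 * ‖x‖ := by ring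
  have := ContinuousLinearMap.opNorm_le_bound f (by positivity) hb
  have hfp : 0 < ‖f‖ := norm_pos_iff.mpr hf
  linarith

private lemma mem_of_meets_balls {X : Type*} [NormedAddCommGroup X] [NormedSpace ℝ X]
    {S : Set X} (hconv : Convex ℝ S) (hcl : IsClosed S) {w : X} {ρ : ℝ} (hρ : 0 < ρ)
    (h : ∀ v ∈ closedBall w ρ, (S ∩ ball v (ρ / 2)).Nonempty) : w ∈ S := by
  by_contra hw
  obtain ⟨f, u, hfu, huw⟩ := geometric_hahn_banach_closed_point hconv hcl hw
  have hSne : S.Nonempty := by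
    obtain ⟨y, hy, -⟩ := h w (mem_closedBall_self hρ.le)
    exact ⟨y, hy⟩
  have hf : f ≠ 0 := by
    rintro rfl
    obtain ⟨a, ha⟩ := hSne
    have := hfu a ha
    simp only [ContinuousLinearMap.zero_apply] at this huw
    linarith
  obtain ⟨e, he1, he2⟩ := exists_unit_half_lt f hf
  have hfp : 0 < ‖f‖ := norm_pos_iff.mpr hf
  have hv : w + ρ • e ∈ closedBall w ρ := by
    rw [mem_closedBall, dist_eq_norm]
    simp only [add_sub_cancel_left, norm_smul, Real.norm_eq_abs, abs_of_pos hρ]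
    calc ρ * ‖e‖ ≤ ρ * 1 := mul_le_mul_of_nonneg_left he1 hρ.le
      _ = ρ := mul_one ρ
  obtain ⟨y, hyS, hyb⟩ := h _ hv
  have h1 : f y < u := hfu y hyS
  have hdist : ‖y - (w + ρ • e)‖ < ρ / 2 := by
    rw [← dist_eq_norm]; exact hyb
  have h2 : f (y - (w + ρ • e)) ≥ -(‖f‖ * (ρ / 2)) := by
    have := (f.le_opNorm (y - (w + ρ • e)))
    have habs : |f (y - (w + ρ • e))| ≤ ‖f‖ * (ρ / 2) := by
      rw [Real.norm_eq_abs] at this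
      exact le_trans this (mul_le_mul_of_nonneg_left hdist.le hfp.le)
    linarith [abs_le.mp habs |>.1]
  have hexp : f y = f w + ρ * f e + f (y - (w + ρ • e)) := by
    have : y = w + ρ • e + (y - (w + ρ • e)) := by abel
    nth_rewrite 1 [this]
    simp [map_add, map_smul, smul_eq_mul]
  have : f y > f w := by
    have h3 : ρ * f e > ρ * (‖f‖ / 2) := mul_lt_mul_of_pos_left he2 hρ
    rw [hexp]
    nlinarith
  linarith

private lemma extract2 {X Λ : Type*} [TopologicalSpace X] [TopologicalSpace Λ]
    {D : Set X} {x₀ : X} {l₀ : Λ} {N : Set (X × Λ)}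
    (hN : N ∈ 𝓝[D ×ˢ (univ : Set Λ)] (x₀, l₀)) :
    ∃ A B, IsOpen A ∧ IsOpen B ∧ x₀ ∈ A ∧ l₀ ∈ B ∧
      ∀ x ∈ A, x ∈ D → ∀ l ∈ B, (x, l) ∈ N := by
  rw [mem_nhdsWithin] at hN
  obtain ⟨T, hTo, hTmem, hTsub⟩ := hN
  obtain ⟨A, B, hAo, hBo, hA, hB, hAB⟩ := isOpen_prod_iff.mp hTo x₀ l₀ hTmem
  exact ⟨A, B, hAo, hBo, hA, hB, fun x hxA hxD l hlB =>
    hTsub ⟨hAB ⟨hxA, hlB⟩, ⟨hxD, mem_univ _⟩⟩⟩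

private lemma extract3 {X Ω : Type*} [TopologicalSpace X] [TopologicalSpace Ω]
    {D D' : Set X} {x₀ y₀ : X} {u₀ : Ω} {N : Set (X × X × Ω)}
    (hN : N ∈ 𝓝[D ×ˢ D' ×ˢ (univ : Set Ω)] (x₀, y₀, u₀)) :
    ∃ A B Cu, IsOpen A ∧ IsOpen B ∧ IsOpen Cu ∧ x₀ ∈ A ∧ y₀ ∈ B ∧ u₀ ∈ Cu ∧
      ∀ x ∈ A, x ∈ D → ∀ y ∈ B, y ∈ D' → ∀ u ∈ Cu, (x, y, u) ∈ N := by
  rw [mem_nhdsWithin] at hN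
  obtain ⟨T, hTo, hTmem, hTsub⟩ := hN
  obtain ⟨A, T', hAo, hT'o, hA, hT', hAT⟩ := isOpen_prod_iff.mp hTo x₀ (y₀, u₀) hTmem
  obtain ⟨B, Cu, hBo, hCo, hB, hC, hBC⟩ := isOpen_prod_iff.mp hT'o y₀ u₀ hT'
  refine ⟨A, B, Cu, hAo, hBo, hCo, hA, hB, hC, fun x hxA hxD y hyB hyD u huC => ?_⟩
  exact hTsub ⟨hAT ⟨hxA, hBC ⟨hyB, huC⟩⟩, ⟨hxD, hyD, mem_univ _⟩⟩

private lemma fix_usc {X Λ : Type*} [NormedAddCommGroup X] [NormedSpace ℝ X]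
    [NormedAddCommGroup Λ] [NormedSpace ℝ Λ]
    {D : Set X} (hDcomp : IsCompact D) {K : X → Λ → Set X} {l₀ : Λ}
    (husc : ∀ x ∈ D, UscWithinAt (fun p : X × Λ => K p.1 p.2) (D ×ˢ (univ : Set Λ)) (x, l₀))
    (hval : ∀ x ∈ D, (K x l₀).Nonempty ∧ IsClosed (K x l₀))
    {V : Set X} (hVo : IsOpen V) (hfix : ∀ x ∈ D, x ∈ K x l₀ → x ∈ V) :
    ∃ δ > 0, ∀ l ∈ ball l₀ δ, ∀ x ∈ D, x ∈ K x l → x ∈ V := by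
  by_contra hcon
  push_neg at hcon
  have hstep : ∀ n : ℕ, ∃ l : Λ, dist l l₀ < 1 / (n + 1) ∧
      ∃ x ∈ D, x ∈ K x l ∧ x ∉ V := by
    intro n
    obtain ⟨l, hl, x, hxD, hxK, hxV⟩ := hcon (1 / (n + 1)) (by positivity)
    exact ⟨l, by simpa [dist_comm] using mem_ball.mp hl, x, hxD, hxK, hxV⟩
  choose l hl x hxD hxK hxV using hstep
  have hltend : Tendsto l atTop (𝓝 l₀) := by
    rw [Metric.tendsto_atTop]
    intro ε hε
    obtain ⟨n₀, hn₀⟩ := exists_nat_one_div_lt (K := ℝ) hε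
    refine ⟨n₀, fun n hn => lt_of_lt_of_le (hl n) (le_trans ?_ hn₀.le)⟩
    have h1 : (n₀ : ℝ) + 1 ≤ (n : ℝ) + 1 := by
      have := Nat.cast_le (α := ℝ).mpr hn; linarith
    exact one_div_le_one_div_of_le (by positivity) h1
  obtain ⟨xb, hxbD, φ, hφ, hxtend⟩ := hDcomp.tendsto_subseq hxD
  have hxbV : xb ∉ V := by
    have hmem : ∀ n, (x ∘ φ) n ∈ Vᶜ := fun n => hxV (φ n)
    have := hVo.isClosed_compl.mem_of_tendsto hxtend (Eventually.of_forall hmem)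
    exact this
  have hxbK : xb ∈ K xb l₀ := by
    by_contra hnot
    obtain ⟨hSne, hScl⟩ := hval xb hxbD
    have hd : 0 < infDist xb (K xb l₀) := (hScl.notMem_iff_infDist_pos hSne).mp hnot
    set d := infDist xb (K xb l₀) with hdd
    obtain ⟨N, hN, hNsub⟩ := husc xb hxbD (thickening (d / 2) (K xb l₀))
      isOpen_thickening (self_subset_thickening (by positivity) _)
    obtain ⟨A, B, hAo, hBo, hA, hB, hABN⟩ := extract2 hN
    have hEA : ∀ᶠ n in atTop, (x ∘ φ) n ∈ A := hxtend.eventually_mem (hAo.mem_nhds hA)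
    have hEB : ∀ᶠ n in atTop, l (φ n) ∈ B :=
      (hltend.comp hφ.tendsto_atTop).eventually_mem (hBo.mem_nhds hB)
    have hEd' : ∀ᶠ n in atTop, dist ((x ∘ φ) n) xb < d / 2 := by
      rw [Metric.tendsto_nhds] at hxtend
      exact hxtend (d / 2) (by positivity)
    obtain ⟨n, hnA, hnB, hnd⟩ := (hEA.and (hEB.and hEd')).exists
    have hmemW : (x ∘ φ) n ∈ thickening (d / 2) (K xb l₀) := by
      have := hNsub _ (hABN _ hnA (hxD (φ n)) _ hnB)
      exact this (hxK (φ n))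
    obtain ⟨z, hzS, hzd⟩ := mem_thickening_iff.mp hmemW
    have h3 : d ≤ dist xb z := infDist_le_dist_of_mem hzS
    have h4 : dist xb z ≤ dist xb ((x ∘ φ) n) + dist ((x ∘ φ) n) z := dist_triangle _ _ _
    have h5 : dist xb ((x ∘ φ) n) = dist ((x ∘ φ) n) xb := dist_comm _ _
    linarith
  exact hxbV (hfix xb hxbD hxbK)

/-- Theorem 4.3: lower semicontinuity at `(u₀, λ₀)` of the solution mapping
`M₂(u, λ) = {x ∈ cl K(x,λ) : F(x,y,u) ⊆ Y \ −int C for all y ∈ K(x,λ)}` of the strong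
parametric vector quasiequilibrium problem, under: `K(·,λ₀)` rotund, `K` continuous at
every point of `D × {λ₀}` with nonempty closed convex values, `F` u.s.c. at every point of
`D × D × {u₀}`, and `F(x,y,u₀) ⊆ Y \ −C` for all `x ∈ M₂(u₀,λ₀)`, `y ∈ K(x,λ₀)`.
Reflexivity of the Banach space `X` is encoded as surjectivity of the canonical inclusion
into the double dual. -/
theorem stmt_14 {Λ Ω Y X : Type*}
    [NormedAddCommGroup Λ] [NormedSpace ℝ Λ]
    [NormedAddCommGroup Ω] [NormedSpace ℝ Ω]
    [NormedAddCommGroup Y] [NormedSpace ℝ Y]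
    [NormedAddCommGroup X] [NormedSpace ℝ X] [CompleteSpace X]
    (hrefl : Function.Surjective (NormedSpace.inclusionInDoubleDual ℝ X))
    (D : Set X) (hDne : D.Nonempty) (hDcomp : IsCompact D) (hDconv : Convex ℝ D)
    (K : X → Λ → Set X) (hKD : ∀ x ∈ D, ∀ l : Λ, K x l ⊆ D)
    (F : X → X → Ω → Set Y)
    (C : Set Y) (hCclosed : IsClosed C) (hCint : (interior C).Nonempty)
    (u₀ : Ω) (l₀ : Λ)
    (M₂ : Ω × Λ → Set X)
    (hM₂ : ∀ p : Ω × Λ, M₂ p = {x | x ∈ D ∧ x ∈ closure (K x p.2) ∧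
      ∀ y ∈ K x p.2, F x y p.1 ⊆ (-(interior C))ᶜ})
    (hMne : ∃ U ∈ 𝓝 ((u₀, l₀) : Ω × Λ), ∀ p ∈ U, (M₂ p).Nonempty)
    (hKrot : RotundOn D (fun x => K x l₀))
    (hKcont : ∀ x ∈ D,
      UscWithinAt (fun p : X × Λ => K p.1 p.2) (D ×ˢ (univ : Set Λ)) (x, l₀) ∧
      LscWithinAt (fun p : X × Λ => K p.1 p.2) (D ×ˢ (univ : Set Λ)) (x, l₀))
    (hKval : ∀ x ∈ D, ∀ l : Λ, (K x l).Nonempty ∧ IsClosed (K x l) ∧ Convex ℝ (K x l))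
    (hFusc : ∀ x ∈ D, ∀ y ∈ D,
      UscWithinAt (fun q : X × X × Ω => F q.1 q.2.1 q.2.2)
        (D ×ˢ D ×ˢ (univ : Set Ω)) (x, y, u₀))
    (hF3 : ∀ x ∈ M₂ (u₀, l₀), ∀ y ∈ K x l₀, F x y u₀ ⊆ (-C)ᶜ) :
    LscAt M₂ (u₀, l₀) := by
  intro x hx V hVo hxV
  have hxM := hx
  rw [hM₂] at hx
  simp only [mem_setOf_eq] at hx
  obtain ⟨hxD, hxcl, hxF⟩ := hx
  have hKcl : IsClosed (K x l₀) := (hKval x hxD l₀).2.1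
  have hxK : x ∈ K x l₀ := by rw [← hKcl.closure_eq]; exact hxcl
  by_cases hcase : ∀ x' ∈ D, x' ∈ K x' l₀ → x' = x
  · -- Case A : x is the unique fixed point of K(·, l₀)
    obtain ⟨δ, hδ, hδV⟩ := fix_usc hDcomp (fun x' h => (hKcont x' h).1)
      (fun x' h => ⟨(hKval x' h l₀).1, (hKval x' h l₀).2.1⟩) hVo
      (fun x' hx'D hx'K => by rw [hcase x' hx'D hx'K]; exact hxV)
    obtain ⟨U₀, hU₀, hU₀ne⟩ := hMne
    refine ⟨U₀ ∩ ((univ : Set Ω) ×ˢ ball l₀ δ), inter_mem hU₀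
      (prod_mem_nhds univ_mem (ball_mem_nhds _ hδ)), ?_⟩
    intro p hp
    obtain ⟨xp, hxp⟩ := hU₀ne p hp.1
    have hxp' := hxp
    rw [hM₂] at hxp'
    simp only [mem_setOf_eq] at hxp'
    obtain ⟨h1, h2, h3⟩ := hxp'
    have hfixp : xp ∈ K xp p.2 := by
      rw [← (hKval xp h1 p.2).2.1.closure_eq]; exact h2
    exact ⟨xp, hxp, hδV p.2 hp.2.2 xp h1 hfixp⟩
  · -- Case B : there is another fixed point; use rotundity
    push_neg at hcase
    obtain ⟨x', hx'D, hx'K, hx'ne⟩ := hcase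
    set G := GraphOn D (fun x'' => K x'' l₀) with hG
    have hpG : ((x, x) : X × X) ∈ G := ⟨hxD, hxK⟩
    have hqG : ((x', x') : X × X) ∈ G := ⟨hx'D, hx'K⟩
    obtain ⟨l, hl, hml⟩ := hKrot.2 (x, x) hpG (x', x') hqG hx'ne.symm hx'ne.symm
    set z := l • x + (1 - l) • x' with hz
    have hmz : l • ((x, x) : X × X) + (1 - l) • ((x', x') : X × X) = (z, z) := rfl
    have hmG : ((z, z) : X × X) ∈ G := by
      rw [← hmz]
      exact hKrot.1 hpG hqG hl.1.le (by linarith [hl.2]) (by ring)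
    rw [hmz] at hml
    have hmint : ((z, z) : X × X) ∈ interior G := by
      by_contra h
      exact hml ⟨subset_closure hmG, h⟩
    obtain ⟨ε₀, hε₀, hballI⟩ := Metric.isOpen_iff.mp isOpen_interior (z, z) hmint
    have hballG : ball ((z, z) : X × X) ε₀ ⊆ G := fun q hq => interior_subset (hballI hq)
    -- the key segment property
    have hseg : ∀ s : ℝ, 0 < s → s ≤ 1 → ∀ y₁ y₂ : X,
        dist y₁ (x + s • (z - x)) < s * ε₀ → dist y₂ (x + s • (z - x)) < s * ε₀ →
        y₁ ∈ D ∧ y₂ ∈ K y₁ l₀ := by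
      intro s hs hs1 y₁ y₂ h₁ h₂
      set w := x + s • (z - x) with hwdef
      set Q : X × X := (z, z) + s⁻¹ • ((y₁, y₂) - (w, w)) with hQ
      have hQball : Q ∈ ball ((z, z) : X × X) ε₀ := by
        rw [mem_ball, dist_eq_norm]
        have hQz : Q - (z, z) = s⁻¹ • ((y₁, y₂) - (w, w)) := by
          rw [hQ]; abel
        rw [hQz, norm_smul]
        have hnorm : ‖((y₁, y₂) - (w, w) : X × X)‖ < s * ε₀ := by
          have hfst : ((y₁, y₂) - (w, w) : X × X) = (y₁ - w, y₂ - w) := rfl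
          rw [hfst, Prod.norm_def]
          rw [dist_eq_norm] at h₁ h₂
          exact max_lt h₁ h₂
        have hin : ‖s⁻¹‖ = s⁻¹ := by
          rw [Real.norm_eq_abs, abs_of_pos (by positivity)]
        rw [hin]
        calc s⁻¹ * ‖((y₁, y₂) - (w, w) : X × X)‖
            < s⁻¹ * (s * ε₀) := by
              exact mul_lt_mul_of_pos_left hnorm (by positivity)
          _ = ε₀ := by field_simp
      have hQG : Q ∈ G := hballG hQball
      have hcomb : (1 - s) • ((x, x) : X × X) + s • Q = (y₁, y₂) := by
        rw [hQ, smul_add, smul_smul, mul_inv_cancel₀ hs.ne', one_smul]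
        have hww : (1 - s) • ((x, x) : X × X) + s • ((z, z) : X × X) = (w, w) := by
          rw [Prod.ext_iff]
          constructor
          · show (1 - s) • x + s • z = x + s • (z - x); module
          · show (1 - s) • x + s • z = x + s • (z - x); module
        rw [← add_assoc, hww]
        abel
      have hres : (1 - s) • ((x, x) : X × X) + s • Q ∈ G :=
        hKrot.1 hpG hQG (by linarith) hs.le (by ring)
      rw [hcomb] at hres
      exact ⟨hres.1, hres.2⟩
    -- the F-part : uniform version of assumption (iii) near x
    have hnegC : IsOpen ((-C)ᶜ) := hCclosed.neg.isOpen_compl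
    have hKxD : K x l₀ ⊆ D := hKD x hxD l₀
    have hcptK : IsCompact (K x l₀) := hDcomp.of_isClosed_subset hKcl hKxD
    have hdata : ∀ y ∈ K x l₀, ∃ A : Set X, ∃ B : Set X, ∃ Cu : Set Ω,
        IsOpen A ∧ IsOpen B ∧ IsOpen Cu ∧ x ∈ A ∧ y ∈ B ∧ u₀ ∈ Cu ∧
        ∀ x'' ∈ A, x'' ∈ D → ∀ y' ∈ B, y' ∈ D → ∀ u ∈ Cu, F x'' y' u ⊆ (-C)ᶜ := by
      intro y hy
      obtain ⟨N, hN, hNsub⟩ := hFusc x hxD y (hKxD hy) ((-C)ᶜ) hnegC (hF3 x hxM y hy)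
      obtain ⟨A, B, Cu, hAo, hBo, hCo, hxA, hyB, huC, hprop⟩ := extract3 hN
      exact ⟨A, B, Cu, hAo, hBo, hCo, hxA, hyB, huC,
        fun x'' hA' hD' y' hB' hD'' u hC' => hNsub _ (hprop _ hA' hD' _ hB' hD'' _ hC')⟩
    choose! A B Cu hAo hBo hCo hxA hyB huC hprop using hdata
    obtain ⟨t, htmem, htcov⟩ := hcptK.elim_nhds_subcover B
      (fun y hy => ((hBo y hy).mem_nhds (hyB y hy)))
    have hW₁ : (⋂ y ∈ t, A y) ∈ 𝓝 x := (Filter.biInter_finset_mem t).mpr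
      (fun y hy => ((hAo y (htmem y hy)).mem_nhds (hxA y (htmem y hy))))
    have hWu : (⋂ y ∈ t, Cu y) ∈ 𝓝 u₀ := (Filter.biInter_finset_mem t).mpr
      (fun y hy => ((hCo y (htmem y hy)).mem_nhds (huC y (htmem y hy))))
    have hOopen : IsOpen (⋃ y ∈ t, B y) := isOpen_biUnion
      (fun y hy => hBo y (htmem y hy))
    have hFkey : ∀ x'' ∈ ⋂ y ∈ t, A y, x'' ∈ D → ∀ y' ∈ ⋃ y ∈ t, B y, y' ∈ D →
        ∀ u ∈ ⋂ y ∈ t, Cu y, F x'' y' u ⊆ (-C)ᶜ := by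
      intro x'' hx'' hx''D y' hy' hy'D u hu
      obtain ⟨y₀, hy₀t, hy'B⟩ := mem_iUnion₂.mp hy'
      exact hprop y₀ (htmem y₀ hy₀t) x'' (mem_iInter₂.mp hx'' y₀ hy₀t) hx''D
        y' hy'B hy'D u (mem_iInter₂.mp hu y₀ hy₀t)
    -- u.s.c. of K at (x, l₀) applied to the open cover
    obtain ⟨N₂, hN₂, hN₂sub⟩ := (hKcont x hxD).1 (⋃ y ∈ t, B y) hOopen htcov
    obtain ⟨A₂, B₂, hA₂o, hB₂o, hxA₂, hlB₂, hN₂prop⟩ := extract2 hN₂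
    -- choose the point w close to x on the segment towards z
    have hnbhd : V ∩ ((⋂ y ∈ t, A y) ∩ A₂) ∈ 𝓝 x :=
      inter_mem (hVo.mem_nhds hxV) (inter_mem hW₁ (hA₂o.mem_nhds hxA₂))
    obtain ⟨η, hη, hηsub⟩ := Metric.mem_nhds_iff.mp hnbhd
    set s : ℝ := min (1 / 2) (η / (‖z - x‖ + 1)) with hsdef
    have hspos : 0 < s := lt_min (by norm_num) (by positivity)
    have hs1 : s ≤ 1 := le_trans (min_le_left _ _) (by norm_num)
    set w := x + s • (z - x) with hwdef
    have hwx : dist w x < η := by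
      have h1 : dist w x = s * ‖z - x‖ := by
        rw [dist_eq_norm, hwdef, add_sub_cancel_left, norm_smul,
          Real.norm_eq_abs, abs_of_pos hspos]
      have h2 : s * ‖z - x‖ ≤ (η / (‖z - x‖ + 1)) * ‖z - x‖ :=
        mul_le_mul_of_nonneg_right (min_le_right _ _) (norm_nonneg _)
      have h3 : (η / (‖z - x‖ + 1)) * ‖z - x‖ < η := by
        rw [div_mul_eq_mul_div, div_lt_iff₀ (by positivity)]
        nlinarith [norm_nonneg (z - x)]
      linarith
    have hwmem : w ∈ V ∩ ((⋂ y ∈ t, A y) ∩ A₂) := hηsub (mem_ball.mpr hwx)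
    set r := s * ε₀ with hrdef
    have hr : 0 < r := by positivity
    have hwD : w ∈ D := (hseg s hspos hs1 w w (by rw [← hwdef, dist_self]; exact hr) (by rw [← hwdef, dist_self]; exact hr)).1
    have hcbK : closedBall w (r / 2) ⊆ K w l₀ := by
      intro v hv
      exact (hseg s hspos hs1 w v (by rw [← hwdef, dist_self]; exact hr)
        (lt_of_le_of_lt (mem_closedBall.mp hv) (by linarith))).2
    have hcbD : closedBall w (r / 2) ⊆ D := hcbK.trans (hKD w hwD l₀)
    have hcbcomp : IsCompact (closedBall w (r / 2)) :=
      hDcomp.of_isClosed_subset isClosed_closedBall hcbD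
    -- a finite net of the small ball, and l.s.c. of K at (w, l₀)
    obtain ⟨t₂, ht₂mem, ht₂cov⟩ := hcbcomp.elim_nhds_subcover (fun v => ball v (r / 8))
      (fun v _ => ball_mem_nhds v (by positivity))
    have hlscdata : ∀ v ∈ closedBall w (r / 2), ∃ A' : Set X, ∃ B' : Set Λ,
        IsOpen A' ∧ IsOpen B' ∧ w ∈ A' ∧ l₀ ∈ B' ∧
        ∀ x'' ∈ A', x'' ∈ D → ∀ lam ∈ B', (K x'' lam ∩ ball v (r / 8)).Nonempty := by
      intro v hv
      obtain ⟨N, hN, hNprop⟩ := (hKcont w hwD).2 v (hcbK hv) (ball v (r / 8))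
        isOpen_ball (mem_ball_self (by positivity))
      obtain ⟨A', B', hA'o, hB'o, hwA', hlB', hprop'⟩ := extract2 hN
      exact ⟨A', B', hA'o, hB'o, hwA', hlB',
        fun x'' hA'' hD'' lam hB'' => hNprop _ (hprop' _ hA'' hD'' _ hB'')⟩
    choose! A' B' hA'o hB'o hwA' hlB' hmeet using hlscdata
    have hB₃ : (⋂ v ∈ t₂, B' v) ∈ 𝓝 l₀ := (Filter.biInter_finset_mem t₂).mpr
      (fun v hv => ((hB'o v (ht₂mem v hv)).mem_nhds (hlB' v (ht₂mem v hv))))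
    have hKwlam : ∀ lam ∈ ⋂ v ∈ t₂, B' v, w ∈ K w lam := by
      intro lam hlam
      have hKv := hKval w hwD lam
      refine mem_of_meets_balls hKv.2.2 hKv.2.1 (show (0 : ℝ) < r / 2 by positivity) ?_
      intro v hv
      obtain ⟨v', hv't, hvv'⟩ := mem_iUnion₂.mp (ht₂cov hv)
      obtain ⟨y, hyK, hyb⟩ := hmeet v' (ht₂mem v' hv't) w (hwA' v' (ht₂mem v' hv't)) hwD
        lam (mem_iInter₂.mp hlam v' hv't)
      refine ⟨y, hyK, ?_⟩
      rw [mem_ball] at hyb hvv' ⊢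
      have htri := dist_triangle y v' v
      have hcomm : dist v' v = dist v v' := dist_comm _ _
      linarith
    -- conclusion
    refine ⟨(⋂ y ∈ t, Cu y) ×ˢ (B₂ ∩ ⋂ v ∈ t₂, B' v),
      prod_mem_nhds hWu (inter_mem (hB₂o.mem_nhds hlB₂) hB₃), ?_⟩
    intro p hp
    obtain ⟨hpu, hpl⟩ := hp
    refine ⟨w, ?_, hwmem.1⟩
    rw [hM₂]
    refine ⟨hwD, subset_closure (hKwlam p.2 hpl.2), ?_⟩
    intro y hy
    have hyO : y ∈ ⋃ y' ∈ t, B y' :=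
      hN₂sub _ (hN₂prop w hwmem.2.2 hwD p.2 hpl.1) hy
    have hyD : y ∈ D := hKD w hwD p.2 hy
    have hsub := hFkey w hwmem.2.1 hwD y hyO hyD p.1 hpu
    exact hsub.trans (compl_subset_compl.mpr (Set.neg_subset_neg.mpr interior_subset))
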